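/- Let d, r be natural numbers and let n_1, …, n_r : ℝ^d → ℝ^d be differentiable maps that are pointwise orthonormal, i.e., ⟨n_i(x), n_j(x)⟩ = δ_{ij} for all x ∈ ℝ^d and all i, j. Define the matrix field Π(x) := I_d − Σ_{l=1}^r n_l(x) n_l(x)ᵀ, define for a differentiable vector field X : ℝ^d → ℝ^d the intrinsic divergence div_Σ X(x) := Σ_{i,j} Π(x)_{ij} ∂_i X_j(x) (where ∂_i X_j(x) is the j-th component of the Fréchet derivative of X at x applied to the i-th standard basis vector), and set f_k(x) := Π(x) e_k for the k-th standard basis vector e_k. Then for every x ∈ ℝ^d, Σ_{k=1}^d (div_Σ f_k)(x) · f_k(x) = 0. -/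

import Mathlib

open Matrix BigOperators

/-- The pointwise orthogonal projector `Π x = I - Σ_l n_l(x) n_l(x)ᵀ` onto the orthogonal
complement of `span {n_1(x), …, n_r(x)}`. -/
noncomputable def projField {d r : ℕ} (n : Fin r → (Fin d → ℝ) → (Fin d → ℝ))
    (x : Fin d → ℝ) : Matrix (Fin d) (Fin d) ℝ :=
  1 - ∑ l, Matrix.vecMulVec (n l x) (n l x)

/-- Intrinsic divergence `div_Σ X (x) = Σ_{i,j} Π(x)_{ij} ∂_i X_j (x)`, where
`∂_i X_j (x)` is the `j`-th component of the Fréchet derivative of `X` at `x` applied to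
the `i`-th standard basis vector. -/
noncomputable def divSigma {d r : ℕ} (n : Fin r → (Fin d → ℝ) → (Fin d → ℝ))
    (X : (Fin d → ℝ) → (Fin d → ℝ)) (x : Fin d → ℝ) : ℝ :=
  ∑ i, ∑ j, projField n x i j * fderiv ℝ X x (Pi.single i 1) j

/-- with `f_k (x) = Π(x) e_k`, the identity
`Σ_k (div_Σ f_k)(x) • f_k(x) = 0` holds at every point, for pointwise-orthonormal
differentiable normal fields `n_1, …, n_r`. -/
theorem stmt7 {d r : ℕ} (n : Fin r → (Fin d → ℝ) → (Fin d → ℝ))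
    (hdiff : ∀ l, Differentiable ℝ (n l))
    (horth : ∀ (x : Fin d → ℝ) (i j : Fin r),
      ∑ k, n i x k * n j x k = if i = j then (1 : ℝ) else 0) :
    ∀ x : Fin d → ℝ,
      ∑ k : Fin d,
        divSigma n (fun y => projField n y *ᵥ Pi.single k 1) x
          • (projField n x *ᵥ Pi.single k 1) = (0 : Fin d → ℝ) := by
  intro x
  classical
  -- entry functions of the projector
  set p : Fin d → Fin d → (Fin d → ℝ) → ℝ := fun a b y => projField n y a b with hp
  have hpform : ∀ (a b : Fin d) (y : Fin d → ℝ),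
      p a b y = (if a = b then (1:ℝ) else 0) - ∑ l, n l y a * n l y b := by
    intro a b y
    simp [hp, projField, Matrix.sub_apply, Matrix.one_apply, Matrix.sum_apply,
      Matrix.vecMulVec_apply]
  have hpd : ∀ a b, Differentiable ℝ (p a b) := by
    intro a b
    have : p a b = fun y => (if a = b then (1:ℝ) else 0) - ∑ l, n l y a * n l y b :=
      funext fun y => hpform a b y
    rw [this]
    exact (differentiable_const _).sub (Differentiable.fun_sum fun l _ =>
      ((differentiable_pi.mp (hdiff l) a)).mul (differentiable_pi.mp (hdiff l) b))
  -- symmetry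
  have hsym : ∀ (y : Fin d → ℝ) (a b : Fin d), p a b y = p b a y := by
    intro y a b
    rw [hpform, hpform]
    congr 1
    · by_cases h : a = b <;> simp [h, eq_comm]
    · exact Finset.sum_congr rfl fun l _ => mul_comm _ _
  -- idempotence pointwise
  have hsq : ∀ (y : Fin d → ℝ) (a b : Fin d), ∑ j, p a j y * p j b y = p a b y := by
    intro y a b
    set A : Fin d → Fin d → ℝ := fun a b => ∑ l, n l y a * n l y b with hA
    have hAA : ∑ j, A a j * A j b = A a b := by
      have : ∀ j, A a j * A j b = ∑ l, ∑ m, (n l y a * n m y b) * (n l y j * n m y j) := by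
        intro j
        rw [hA, Finset.sum_mul_sum]
        exact Finset.sum_congr rfl fun l _ => Finset.sum_congr rfl fun m _ => by ring
      rw [Finset.sum_congr rfl fun j _ => this j]
      rw [Finset.sum_comm]
      have : ∀ l, ∑ j, ∑ m, (n l y a * n m y b) * (n l y j * n m y j)
          = ∑ m, (n l y a * n m y b) * ∑ j, n l y j * n m y j := by
        intro l
        rw [Finset.sum_comm]
        exact Finset.sum_congr rfl fun m _ => by rw [Finset.mul_sum]
      rw [Finset.sum_congr rfl fun l _ => this l]
      rw [hA]
      refine Finset.sum_congr rfl fun l _ => ?_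
      rw [Finset.sum_congr rfl fun m _ => by rw [horth y l m]]
      simp
    simp only [hpform, hA]
    have expand : ∀ j, ((if a = j then (1:ℝ) else 0) - A a j) * ((if j = b then (1:ℝ) else 0) - A j b)
        = (if a = j then (1:ℝ) else 0) * (if j = b then (1:ℝ) else 0)
          - (if a = j then (1:ℝ) else 0) * A j b - A a j * (if j = b then (1:ℝ) else 0)
          + A a j * A j b := by intro j; ring
    rw [Finset.sum_congr rfl fun j _ => expand j]
    rw [Finset.sum_add_distrib, Finset.sum_sub_distrib, Finset.sum_sub_distrib, hAA]
    simp [Finset.sum_ite_eq, Finset.sum_ite_eq', mul_ite, ite_mul]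
    rfl
  -- derivative entries
  set D : Fin d → Fin d → Fin d → ℝ :=
    fun i a b => fderiv ℝ (p a b) x (Pi.single i 1) with hD
  set P : Fin d → Fin d → ℝ := fun a b => p a b x with hP
  -- derivative of Π² = Π
  have hder : ∀ (a b i : Fin d),
      ∑ j, (P a j * D i j b + P j b * D i a j) = D i a b := by
    intro a b i
    have h1 : HasFDerivAt (fun y => ∑ j, p a j y * p j b y)
        (∑ j, (p a j x • fderiv ℝ (p j b) x + p j b x • fderiv ℝ (p a j) x)) x := by
      refine HasFDerivAt.fun_sum fun j _ => ?_
      exact ((hpd a j x).hasFDerivAt).mul ((hpd j b x).hasFDerivAt)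
    have heq : (fun y => ∑ j, p a j y * p j b y) = p a b := funext fun y => hsq y a b
    rw [heq] at h1
    have h2 := h1.fderiv
    simp only [hD, hP]
    rw [h2]
    simp [ContinuousLinearMap.sum_apply, ContinuousLinearMap.add_apply,
      ContinuousLinearMap.smul_apply, smul_eq_mul]
  -- P also idempotent and symmetric at x
  have hPP : ∀ a b, ∑ j, P a j * P j b = P a b := fun a b => hsq x a b
  have hPsym : ∀ a b, P a b = P b a := fun a b => hsym x a b
  -- key algebraic step : Π (∂_i Π) Π = 0
  have hkey : ∀ (i a b : Fin d), ∑ k, (∑ j, P a j * D i j k) * P k b = 0 := by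
    intro i a b
    have hsub : ∀ k, ∑ j, P a j * D i j k = D i a k - ∑ j, P j k * D i a j := by
      intro k
      have := hder a k i
      rw [Finset.sum_add_distrib] at this
      linarith
    calc ∑ k, (∑ j, P a j * D i j k) * P k b
        = ∑ k, (D i a k * P k b - (∑ j, P j k * D i a j) * P k b) := by
          refine Finset.sum_congr rfl fun k _ => ?_
          rw [hsub k]; ring
      _ = ∑ k, D i a k * P k b - ∑ k, (∑ j, P j k * D i a j) * P k b :=
          Finset.sum_sub_distrib _ _
      _ = ∑ k, D i a k * P k b - ∑ j, D i a j * ∑ k, P j k * P k b := by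
          congr 1
          calc ∑ k, (∑ j, P j k * D i a j) * P k b
              = ∑ k, ∑ j, D i a j * (P j k * P k b) := by
                refine Finset.sum_congr rfl fun k _ => ?_
                rw [Finset.sum_mul]
                exact Finset.sum_congr rfl fun j _ => by ring
            _ = ∑ j, ∑ k, D i a j * (P j k * P k b) := Finset.sum_comm
            _ = ∑ j, D i a j * ∑ k, P j k * P k b :=
                Finset.sum_congr rfl fun j _ => (Finset.mul_sum _ _ _).symm
      _ = 0 := by
          have hh : ∀ j, D i a j * ∑ k, P j k * P k b = D i a j * P j b :=
            fun j => by rw [hPP]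
          rw [Finset.sum_congr rfl fun j _ => hh j]
          simp
  -- identify the vector field entries
  have hXeq : ∀ k : Fin d, (fun y => projField n y *ᵥ Pi.single k (1:ℝ))
      = fun y a => p a k y := by
    intro k
    funext y
    simp [hp, Matrix.mulVec_single]
    rfl
  have hfd : ∀ (k i j : Fin d),
      fderiv ℝ (fun y => projField n y *ᵥ Pi.single k (1:ℝ)) x (Pi.single i 1) j
        = D i j k := by
    intro k i j
    rw [hXeq k]
    rw [fderiv_pi (fun a => (hpd a k x))]
    simp [hD]
  have hdiv : ∀ k : Fin d,
      divSigma n (fun y => projField n y *ᵥ Pi.single k 1) x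
        = ∑ i, ∑ j, P i j * D i j k := by
    intro k
    unfold divSigma
    exact Finset.sum_congr rfl fun i _ => Finset.sum_congr rfl fun j _ => by
      rw [hfd k i j]
  funext m
  rw [Pi.zero_apply, Finset.sum_apply]
  have hgoal : ∀ k, (divSigma n (fun y => projField n y *ᵥ Pi.single k 1) x
      • (projField n x *ᵥ Pi.single k (1:ℝ))) m
      = (∑ i, ∑ j, P i j * D i j k) * P k m := by
    intro k
    rw [Pi.smul_apply, smul_eq_mul, hdiv k]
    have hv : (projField n x *ᵥ Pi.single k (1:ℝ)) m = P k m := by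
      rw [Matrix.mulVec_single]
      rw [hPsym k m]
      simp [hP, hp]
    rw [hv]
  rw [Finset.sum_congr rfl fun k _ => hgoal k]
  calc ∑ k, (∑ i, ∑ j, P i j * D i j k) * P k m
      = ∑ k, ∑ i, (∑ j, P i j * D i j k) * P k m :=
        Finset.sum_congr rfl fun k _ => by rw [Finset.sum_mul]
    _ = ∑ i, ∑ k, (∑ j, P i j * D i j k) * P k m := Finset.sum_comm
    _ = 0 := by
        rw [Finset.sum_congr rfl fun i _ => hkey i i m]
        simp
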